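/- For every n ≥ 1, every m > 0 and every x ∈ ℝ^n, there exists a unique p ∈ ℝ^n such that ∇W_m(p) = x, and for this p the supremum defining the conjugate is attained at p: W_m^*(x) = ⟨p, x⟩ − W_m(p). In particular, the gradient map ∇W_m : ℝ^n → ℝ^n is a bijection. -/

import Mathlib

noncomputable section

/-- The regularized energy density `W_m(p) = (‖p‖² + m⁻²)^{1/2} + m⁻¹‖p‖²`. -/
def Wfun (n : ℕ) (m : ℝ) (p : EuclideanSpace ℝ (Fin n)) : ℝ :=
  Real.sqrt (‖p‖ ^ 2 + m⁻¹ ^ 2) + m⁻¹ * ‖p‖ ^ 2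

/-- The Legendre–Fenchel conjugate `W_m^*(x) = sup_p (⟨p,x⟩ - W_m(p))`. -/
def Wstar (n : ℕ) (m : ℝ) (x : EuclideanSpace ℝ (Fin n)) : ℝ :=
  sSup (Set.range fun p => (inner ℝ p x : ℝ) - Wfun n m p)

namespace WfunAux

variable {n : ℕ} {m : ℝ}

/-- the radial coefficient -/
def cfun (m r : ℝ) : ℝ := (Real.sqrt (r ^ 2 + m⁻¹ ^ 2))⁻¹ + 2 * m⁻¹

theorem sqrt_pos' (hm : 0 < m) (r : ℝ) : 0 < Real.sqrt (r ^ 2 + m⁻¹ ^ 2) :=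
  Real.sqrt_pos.mpr (by positivity)

theorem cfun_pos (hm : 0 < m) (r : ℝ) : 0 < cfun m r := by
  have := sqrt_pos' hm r
  have : (0:ℝ) < (Real.sqrt (r ^ 2 + m⁻¹ ^ 2))⁻¹ := by positivity
  have hmi : (0:ℝ) < m⁻¹ := by positivity
  unfold cfun; linarith

theorem gradient_eq (hm : 0 < m) (p : EuclideanSpace ℝ (Fin n)) :
    gradient (Wfun n m) p = cfun m ‖p‖ • p := by
  have hmne : m⁻¹ ≠ 0 := by positivity
  have hpos : (0:ℝ) < ‖p‖ ^ 2 + m⁻¹ ^ 2 := by positivity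
  have hsq : HasFDerivAt (fun q : EuclideanSpace ℝ (Fin n) => ‖q‖ ^ 2)
      (2 • (innerSL ℝ p)) p := (hasStrictFDerivAt_norm_sq p).hasFDerivAt
  have h1 : HasFDerivAt (fun q : EuclideanSpace ℝ (Fin n) => ‖q‖ ^ 2 + m⁻¹ ^ 2)
      (2 • (innerSL ℝ p)) p := hsq.add_const _
  have h2 : HasFDerivAt (fun q : EuclideanSpace ℝ (Fin n) => Real.sqrt (‖q‖ ^ 2 + m⁻¹ ^ 2))
      ((1 / (2 * Real.sqrt (‖p‖ ^ 2 + m⁻¹ ^ 2))) • (2 • (innerSL ℝ p))) p :=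
    (Real.hasDerivAt_sqrt hpos.ne').comp_hasFDerivAt p h1
  have h3 : HasFDerivAt (fun q : EuclideanSpace ℝ (Fin n) => m⁻¹ * ‖q‖ ^ 2)
      (m⁻¹ • (2 • (innerSL ℝ p))) p := hsq.const_mul _
  have h4 := h2.add h3
  have hg : HasGradientAt (Wfun n m) (cfun m ‖p‖ • p) p := by
    rw [hasGradientAt_iff_hasFDerivAt]
    refine h4.congr_fderiv (Eq.symm ?_)
    ext v
    have hs : (0:ℝ) < Real.sqrt (‖p‖ ^ 2 + m⁻¹ ^ 2) := sqrt_pos' hm _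
    simp [InnerProductSpace.toDual_apply_apply, inner_smul_left, inner_add_left,
      real_inner_smul_left, cfun, Wfun]
    field_simp
  exact hg.gradient

/-- the scalar radial map -/
theorem phi_strictMono (hm : 0 < m) {r s : ℝ} (hr : 0 ≤ r) (hrs : r < s) :
    r * cfun m r < s * cfun m s := by
  have hs0 : 0 < s := lt_of_le_of_lt hr hrs
  have hmi : (0:ℝ) < m⁻¹ := by positivity
  have hsr := sqrt_pos' hm r
  have hss := sqrt_pos' hm s
  have h1 : r * (Real.sqrt (r ^ 2 + m⁻¹ ^ 2))⁻¹ ≤ s * (Real.sqrt (s ^ 2 + m⁻¹ ^ 2))⁻¹ := by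
    rw [← div_eq_mul_inv, ← div_eq_mul_inv, div_le_div_iff₀ hsr hss]
    have key : (r * Real.sqrt (s ^ 2 + m⁻¹ ^ 2)) ^ 2 ≤ (s * Real.sqrt (r ^ 2 + m⁻¹ ^ 2)) ^ 2 := by
      have e1 : Real.sqrt (s ^ 2 + m⁻¹ ^ 2) ^ 2 = s ^ 2 + m⁻¹ ^ 2 :=
        Real.sq_sqrt (by positivity)
      have e2 : Real.sqrt (r ^ 2 + m⁻¹ ^ 2) ^ 2 = r ^ 2 + m⁻¹ ^ 2 :=
        Real.sq_sqrt (by positivity)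
      have : r ^ 2 ≤ s ^ 2 := by nlinarith
      nlinarith
    have h2 : 0 ≤ r * Real.sqrt (s ^ 2 + m⁻¹ ^ 2) := by positivity
    have h3 : 0 ≤ s * Real.sqrt (r ^ 2 + m⁻¹ ^ 2) := by positivity
    nlinarith
  have h2 : 2 * m⁻¹ * r < 2 * m⁻¹ * s := by nlinarith
  unfold cfun
  nlinarith

theorem phi_inj (hm : 0 < m) {r s : ℝ} (hr : 0 ≤ r) (hs : 0 ≤ s)
    (h : r * cfun m r = s * cfun m s) : r = s := by
  rcases lt_trichotomy r s with h' | h' | h'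
  · exact absurd h (ne_of_lt (phi_strictMono hm hr h'))
  · exact h'
  · exact absurd h.symm (ne_of_lt (phi_strictMono hm hs h'))

theorem phi_surj (hm : 0 < m) {R : ℝ} (hR : 0 ≤ R) :
    ∃ r, 0 ≤ r ∧ r * cfun m r = R := by
  have hcont : ContinuousOn (fun r => r * cfun m r) (Set.Icc 0 (m * R)) := by
    apply Continuous.continuousOn
    apply continuous_id.mul
    unfold cfun
    apply Continuous.add _ continuous_const
    apply Continuous.inv₀
    · exact (continuous_pow 2 |>.add continuous_const).sqrt
    · intro x; exact (sqrt_pos' hm x).ne'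
  have hmem : R ∈ Set.Icc ((fun r => r * cfun m r) 0) ((fun r => r * cfun m r) (m * R)) := by
    constructor
    · simpa using hR
    · simp only
      have hmi : (0:ℝ) < m⁻¹ := by positivity
      have h1 : 0 < (Real.sqrt ((m*R) ^ 2 + m⁻¹ ^ 2))⁻¹ := by
        have := sqrt_pos' hm (m*R); positivity
      have h2 : (m * R) * cfun m (m * R) ≥ (m * R) * (2 * m⁻¹) := by
        have hmr : 0 ≤ m * R := by positivity
        unfold cfun; nlinarith
      have h3 : (m * R) * (2 * m⁻¹) = 2 * R := by field_simp
      linarith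
  have := intermediate_value_Icc (by positivity : (0:ℝ) ≤ m * R) hcont hmem
  obtain ⟨r, hr, hr2⟩ := this
  exact ⟨r, hr.1, hr2⟩

theorem exists_grad_eq (hm : 0 < m) (x : EuclideanSpace ℝ (Fin n)) :
    ∃ p, gradient (Wfun n m) p = x := by
  rcases eq_or_ne x 0 with rfl | hx
  · exact ⟨0, by rw [gradient_eq hm]; simp⟩
  · have hR : 0 < ‖x‖ := norm_pos_iff.mpr hx
    obtain ⟨r, hr0, hr⟩ := phi_surj hm hR.le
    refine ⟨(r / ‖x‖) • x, ?_⟩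
    have hnp : ‖(r / ‖x‖) • x‖ = r := by
      rw [norm_smul, Real.norm_eq_abs, abs_of_nonneg (by positivity)]
      field_simp
    rw [gradient_eq hm, hnp, smul_smul]
    have : cfun m r * (r / ‖x‖) = 1 := by
      rw [mul_div_assoc', mul_comm, hr, div_self hR.ne']
    rw [this, one_smul]

theorem grad_inj (hm : 0 < m) : Function.Injective (gradient (Wfun n m)) := by
  intro p q h
  rw [gradient_eq hm, gradient_eq hm] at h
  have hnorm : ‖p‖ * cfun m ‖p‖ = ‖q‖ * cfun m ‖q‖ := by
    have := congrArg norm h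
    rwa [norm_smul, norm_smul, Real.norm_eq_abs, Real.norm_eq_abs,
      abs_of_pos (cfun_pos hm _), abs_of_pos (cfun_pos hm _), mul_comm, mul_comm (cfun m ‖q‖)]
      at this
  have heq : ‖p‖ = ‖q‖ := phi_inj hm (norm_nonneg p) (norm_nonneg q) hnorm
  rw [heq] at h
  exact smul_right_injective _ (cfun_pos hm ‖q‖).ne' h

theorem conj_ineq (hm : 0 < m) (p q : EuclideanSpace ℝ (Fin n)) :
    (inner ℝ q (gradient (Wfun n m) p) : ℝ) - Wfun n m q ≤
      (inner ℝ p (gradient (Wfun n m) p) : ℝ) - Wfun n m p := by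
  rw [gradient_eq hm]
  set A := ‖p‖ with hA
  set B := ‖q‖ with hB
  set a := m⁻¹ with ha
  have hmi : (0:ℝ) < a := by positivity
  set s := Real.sqrt (A ^ 2 + a ^ 2) with hsdef
  set t := Real.sqrt (B ^ 2 + a ^ 2) with htdef
  have hs : 0 < s := sqrt_pos' hm A
  have ht : 0 < t := sqrt_pos' hm B
  have hs2 : s ^ 2 = A ^ 2 + a ^ 2 := Real.sq_sqrt (by positivity)
  have ht2 : t ^ 2 = B ^ 2 + a ^ 2 := Real.sq_sqrt (by positivity)
  have hiq : (inner ℝ q (cfun m A • p) : ℝ) = cfun m A * inner ℝ q p := by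
    rw [real_inner_smul_right]
  have hip : (inner ℝ p (cfun m A • p) : ℝ) = cfun m A * A ^ 2 := by
    rw [real_inner_smul_right, real_inner_self_eq_norm_sq]
  set I : ℝ := inner ℝ q p with hI
  have hIle : I ≤ A * B := by
    calc I ≤ ‖q‖ * ‖p‖ := real_inner_le_norm q p
    _ = A * B := by rw [mul_comm]
  have hst : A * B + a ^ 2 ≤ s * t := by
    have hsq : (A * B + a ^ 2) ^ 2 ≤ (s * t) ^ 2 := by nlinarith [sq_nonneg (A - B)]
    nlinarith [mul_pos hs ht, sq_nonneg (A * B + a ^ 2)]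
  have key : s⁻¹ * (I - A ^ 2) ≤ t - s := by
    rw [inv_mul_le_iff₀ hs]
    nlinarith
  have hc : cfun m A = s⁻¹ + 2 * a := rfl
  rw [hiq, hip]
  simp only [Wfun, ← hsdef, ← htdef, ← hA, ← hB, ← ha]
  rw [hc]
  nlinarith [key, hIle, mul_nonneg hmi.le (sq_nonneg (A - B)),
    mul_nonneg hmi.le (sub_nonneg.2 hIle)]

theorem wstar_eq (hm : 0 < m) (x p : EuclideanSpace ℝ (Fin n))
    (h : gradient (Wfun n m) p = x) :
    Wstar n m x = (inner ℝ p x : ℝ) - Wfun n m p := by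
  unfold Wstar
  apply IsGreatest.csSup_eq
  constructor
  · exact ⟨p, rfl⟩
  · rintro _ ⟨q, rfl⟩
    subst h
    exact conj_ineq hm p q

end WfunAux

/-- For every `x` there is a unique `p` with `∇W_m(p) = x`, at which the supremum defining
`W_m^*(x)` is attained; in particular `∇W_m` is a bijection. -/
theorem Wfun_gradient_bijective (n : ℕ) (hn : 1 ≤ n) (m : ℝ) (hm : 0 < m) :
    (∀ x : EuclideanSpace ℝ (Fin n), ∃! p : EuclideanSpace ℝ (Fin n),
      gradient (Wfun n m) p = x) ∧
    (∀ x p : EuclideanSpace ℝ (Fin n), gradient (Wfun n m) p = x →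
      Wstar n m x = (inner ℝ p x : ℝ) - Wfun n m p) ∧
    Function.Bijective (gradient (Wfun n m)) := by
  refine ⟨fun x => ?_, fun x p h => WfunAux.wstar_eq hm x p h,
    WfunAux.grad_inj hm, fun x => WfunAux.exists_grad_eq hm x⟩
  obtain ⟨p, hp⟩ := WfunAux.exists_grad_eq hm x
  exact ⟨p, hp, fun q hq => WfunAux.grad_inj hm (hq.trans hp.symm)⟩
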